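/- Let (a_n) be a sequence of complex numbers with |a_n| ≤ 1 for all n, and assume (a_n) is periodic with period N. Then for any positive integer H, (1/N)|∑_{n<N} a_n| ≤ ( (2/H) ∑_{h<H} |(1/N) ∑_{n<N} a_n · conj(a_{n+h})| )^{1/2}. -/

import Mathlib

open Finset Complex

private lemma vdc_shift_sum (N : ℕ) : ∀ (k : ℕ) (f : ℕ → ℂ), (∀ n, f (n + N) = f n) →
    ∑ n ∈ range N, f (n + k) = ∑ n ∈ range N, f n := by
  have h1 : ∀ (f : ℕ → ℂ), (∀ n, f (n + N) = f n) →
      ∑ n ∈ range N, f (n + 1) = ∑ n ∈ range N, f n := by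
    intro f hf
    have e1 := Finset.sum_range_succ' f N
    have e2 := Finset.sum_range_succ f N
    have h0 : f N = f 0 := by simpa using hf 0
    rw [e2, h0] at e1
    exact add_right_cancel e1.symm
  intro k
  induction k with
  | zero => intro f hf; simp
  | succ k ih =>
    intro f hf
    have hg : ∀ n, f (n + N + 1) = f (n + 1) := fun n => by
      rw [show n + N + 1 = n + 1 + N from by omega]
      exact hf (n + 1)
    calc ∑ n ∈ range N, f (n + (k + 1))
        = ∑ n ∈ range N, (fun m => f (m + 1)) (n + k) := rfl
      _ = ∑ n ∈ range N, f (n + 1) := ih (fun m => f (m + 1)) hg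
      _ = ∑ n ∈ range N, f n := h1 f hf

/-- Van der Corput's inequality in the periodic case. -/
theorem vdc_periodic (a : ℕ → ℂ) (N H : ℕ) (hN : 0 < N) (hH : 0 < H)
    (hbound : ∀ n, ‖a n‖ ≤ 1)
    (hper : ∀ n, a (n + N) = a n) :
    (1 / N : ℝ) * ‖∑ n ∈ range N, a n‖ ≤
      Real.sqrt ((2 / H) * ∑ h ∈ range H,
        ‖(1 / N : ℂ) * ∑ n ∈ range N, a n * (starRingEnd ℂ) (a (n + h))‖) := by
  have hNpos : (0:ℝ) < N := by exact_mod_cast hN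
  have hHpos : (0:ℝ) < H := by exact_mod_cast hH
  set S : ℂ := ∑ n ∈ range N, a n with hSdef
  set C : ℕ → ℂ := fun d => ∑ n ∈ range N, a n * (starRingEnd ℂ) (a (n + d)) with hCdef
  set G : ℝ := ∑ d ∈ range H, ‖C d‖ with hGdef
  have hGnonneg : 0 ≤ G := sum_nonneg fun d _ => norm_nonneg _
  -- shift evaluation of correlations
  have hCshift : ∀ h d : ℕ,
      ∑ n ∈ range N, a (n + h) * (starRingEnd ℂ) (a (n + h + d)) = C d := by
    intro h d
    have := vdc_shift_sum N h (fun n => a n * (starRingEnd ℂ) (a (n + d)))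
      (fun n => by
        show a (n + N) * (starRingEnd ℂ) (a (n + N + d)) = a n * (starRingEnd ℂ) (a (n + d))
        rw [hper n, show n + N + d = n + d + N from by omega, hper (n + d)])
    exact this
  have hT : ∀ h h' : ℕ,
      ‖∑ n ∈ range N, a (n + h) * (starRingEnd ℂ) (a (n + h'))‖ =
        if h ≤ h' then ‖C (h' - h)‖ else ‖C (h - h')‖ := by
    intro h h'
    rcases le_or_gt h h' with hle | hlt
    · rw [if_pos hle, ← hCshift h (h' - h)]
      congr 1
      refine sum_congr rfl fun n _ => ?_
      rw [show n + h + (h' - h) = n + h' from by omega]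
    · rw [if_neg (not_le.mpr hlt)]
      have e : ∑ n ∈ range N, a (n + h) * (starRingEnd ℂ) (a (n + h')) =
          (starRingEnd ℂ) (∑ n ∈ range N, a (n + h') * (starRingEnd ℂ) (a (n + h))) := by
        rw [map_sum]
        refine sum_congr rfl fun n _ => ?_
        simp [mul_comm]
      rw [e, Complex.norm_conj, ← hCshift h' (h - h')]
      congr 1
      refine sum_congr rfl fun n _ => ?_
      rw [show n + h' + (h - h') = n + h from by omega]
  -- row bound
  have hrow : ∀ h ∈ range H, (∑ h' ∈ range H,
      ‖∑ n ∈ range N, a (n + h) * (starRingEnd ℂ) (a (n + h'))‖) ≤ 2 * G := by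
    intro h hh
    have hhH : h < H := mem_range.mp hh
    rw [← Finset.sum_range_add_sum_Ico _ (le_of_lt hhH)]
    have part1 : ∑ h' ∈ range h,
        ‖∑ n ∈ range N, a (n + h) * (starRingEnd ℂ) (a (n + h'))‖ ≤ G := by
      have e1 : ∀ h' ∈ range h,
          ‖∑ n ∈ range N, a (n + h) * (starRingEnd ℂ) (a (n + h'))‖ =
          ‖C (h - h')‖ := by
        intro h' hh'
        have : ¬ h ≤ h' := by have := mem_range.mp hh'; omega
        rw [hT h h', if_neg this]
      rw [sum_congr rfl e1]
      have e2 : ∑ h' ∈ range h, ‖C (h - h')‖ =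
          ∑ j ∈ range h, ‖C (j + 1)‖ := by
        calc ∑ h' ∈ range h, ‖C (h - h')‖
            = ∑ j ∈ range h, ‖C (h - (h - 1 - j))‖ :=
              (Finset.sum_range_reflect (fun j => ‖C (h - j)‖) h).symm
          _ = ∑ j ∈ range h, ‖C (j + 1)‖ := by
              refine sum_congr rfl fun j hj => ?_
              have hj' := mem_range.mp hj
              rw [show h - (h - 1 - j) = j + 1 from by omega]
      rw [e2]
      have e3 : ∑ j ∈ range h, ‖C (j + 1)‖ ≤
          ∑ d ∈ range (h + 1), ‖C d‖ := by
        rw [Finset.sum_range_succ' (fun d => ‖C d‖) h]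
        simpa using norm_nonneg (C 0)
      refine e3.trans ?_
      exact Finset.sum_le_sum_of_subset_of_nonneg
        (Finset.range_subset_range.mpr (by omega)) (fun d _ _ => norm_nonneg _)
    have part2 : ∑ h' ∈ Finset.Ico h H,
        ‖∑ n ∈ range N, a (n + h) * (starRingEnd ℂ) (a (n + h'))‖ ≤ G := by
      have e1 : ∀ h' ∈ Finset.Ico h H,
          ‖∑ n ∈ range N, a (n + h) * (starRingEnd ℂ) (a (n + h'))‖ =
          ‖C (h' - h)‖ := by
        intro h' hh'
        have : h ≤ h' := (Finset.mem_Ico.mp hh').1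
        rw [hT h h', if_pos this]
      rw [sum_congr rfl e1]
      rw [Finset.sum_Ico_eq_sum_range]
      have e2 : ∑ i ∈ range (H - h), ‖C (h + i - h)‖ =
          ∑ i ∈ range (H - h), ‖C i‖ := by
        refine sum_congr rfl fun i _ => ?_
        rw [show h + i - h = i from by omega]
      rw [e2]
      exact Finset.sum_le_sum_of_subset_of_nonneg
        (Finset.range_subset_range.mpr (by omega)) (fun d _ _ => norm_nonneg _)
    calc _ ≤ G + G := add_le_add part1 part2
      _ = 2 * G := by ring
  -- the smoothed sum
  set b : ℕ → ℂ := fun n => ∑ h ∈ range H, a (n + h) with hbdef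
  have hbsum : ∑ n ∈ range N, b n = (H : ℂ) * S := by
    simp only [hbdef]
    rw [Finset.sum_comm]
    calc ∑ h ∈ range H, ∑ n ∈ range N, a (n + h)
        = ∑ _h ∈ range H, S := sum_congr rfl fun h _ => vdc_shift_sum N h a hper
      _ = (H : ℂ) * S := by rw [sum_const, card_range, nsmul_eq_mul]
  have hexp : ∑ n ∈ range N, b n * (starRingEnd ℂ) (b n)
      = ∑ h ∈ range H, ∑ h' ∈ range H,
          ∑ n ∈ range N, a (n + h) * (starRingEnd ℂ) (a (n + h')) := by
    have e1 : ∀ n, b n * (starRingEnd ℂ) (b n) =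
        ∑ h ∈ range H, ∑ h' ∈ range H, a (n + h) * (starRingEnd ℂ) (a (n + h')) := by
      intro n
      simp only [hbdef]
      rw [map_sum, Finset.sum_mul_sum]
    rw [sum_congr rfl fun n _ => e1 n]
    rw [Finset.sum_comm]
    refine sum_congr rfl fun h _ => ?_
    rw [Finset.sum_comm]
  have hreal : (∑ n ∈ range N, (‖b n‖) ^ 2 : ℝ) =
      ‖∑ n ∈ range N, b n * (starRingEnd ℂ) (b n)‖ := by
    have e : ∑ n ∈ range N, b n * (starRingEnd ℂ) (b n)
        = ((∑ n ∈ range N, (‖b n‖) ^ 2 : ℝ) : ℂ) := by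
      rw [Complex.ofReal_sum]
      refine sum_congr rfl fun n _ => ?_
      rw [Complex.mul_conj, Complex.normSq_eq_norm_sq]
    rw [e, Complex.norm_real, Real.norm_eq_abs]
    exact (_root_.abs_of_nonneg (sum_nonneg fun n _ => sq_nonneg _)).symm
  have h6 : ∑ n ∈ range N, (‖b n‖) ^ 2 ≤ 2 * H * G := by
    rw [hreal, hexp]
    calc ‖∑ h ∈ range H, ∑ h' ∈ range H,
            ∑ n ∈ range N, a (n + h) * (starRingEnd ℂ) (a (n + h'))‖
        ≤ ∑ h ∈ range H, ‖∑ h' ∈ range H,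
            ∑ n ∈ range N, a (n + h) * (starRingEnd ℂ) (a (n + h'))‖ :=
          norm_sum_le _ _
      _ ≤ ∑ h ∈ range H, ∑ h' ∈ range H,
            ‖∑ n ∈ range N, a (n + h) * (starRingEnd ℂ) (a (n + h'))‖ :=
          sum_le_sum fun h _ => norm_sum_le _ _
      _ ≤ ∑ _h ∈ range H, 2 * G := sum_le_sum hrow
      _ = 2 * H * G := by rw [sum_const, card_range, nsmul_eq_mul]; ring
  have h7 : (∑ n ∈ range N, ‖b n‖) ^ 2 ≤
      (N : ℝ) * ∑ n ∈ range N, (‖b n‖) ^ 2 := by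
    have := sq_sum_le_card_mul_sum_sq (s := range N) (f := fun n => ‖b n‖)
    simpa [card_range] using this
  have h8 : ‖(H : ℂ) * S‖ ≤ ∑ n ∈ range N, ‖b n‖ := by
    rw [← hbsum]
    exact norm_sum_le _ _
  have key : ((H : ℝ) * ‖S‖) ^ 2 ≤ (N : ℝ) * (2 * H * G) := by
    have e : ‖(H : ℂ) * S‖ = (H : ℝ) * ‖S‖ := by
      rw [norm_mul, Complex.norm_natCast]
    calc ((H : ℝ) * ‖S‖) ^ 2 = (‖(H : ℂ) * S‖) ^ 2 := by rw [e]
      _ ≤ (∑ n ∈ range N, ‖b n‖) ^ 2 := by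
          have := pow_le_pow_left₀ (norm_nonneg _) h8 2
          exact this
      _ ≤ (N : ℝ) * ∑ n ∈ range N, (‖b n‖) ^ 2 := h7
      _ ≤ (N : ℝ) * (2 * H * G) := by
          exact mul_le_mul_of_nonneg_left h6 hNpos.le
  have key2 : (H : ℝ) * (‖S‖) ^ 2 ≤ 2 * (N : ℝ) * G := by
    refine le_of_mul_le_mul_left ?_ hHpos
    calc (H : ℝ) * ((H : ℝ) * (‖S‖) ^ 2) = ((H : ℝ) * ‖S‖) ^ 2 := by ring
      _ ≤ (N : ℝ) * (2 * H * G) := key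
      _ = (H : ℝ) * (2 * (N : ℝ) * G) := by ring
  -- rewrite RHS
  have hRHS : (2 / (H : ℝ)) * ∑ h ∈ range H, ‖(1 / (N : ℂ)) * C h‖ =
      2 / ((H : ℝ) * N) * G := by
    have e : ∀ h, ‖(1 / (N : ℂ)) * C h‖ = (1 / (N : ℝ)) * ‖C h‖ := by
      intro h
      rw [norm_mul, norm_div, norm_one, Complex.norm_natCast]
    rw [sum_congr rfl fun h _ => e h, ← Finset.mul_sum, ← hGdef]
    field_simp
  have hfinal : ((1 / (N : ℝ)) * ‖S‖) ^ 2 ≤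
      (2 / (H : ℝ)) * ∑ h ∈ range H, ‖(1 / (N : ℂ)) * C h‖ := by
    have hN0 : (N : ℝ) ≠ 0 := hNpos.ne'
    have hH0 : (H : ℝ) ≠ 0 := hHpos.ne'
    rw [hRHS]
    rw [show (2:ℝ) / ((H : ℝ) * N) * G = (2 * (N:ℝ) * G) / ((H:ℝ) * (N * N)) from by
      rw [div_mul_eq_mul_div, div_eq_div_iff (by positivity) (by positivity)]; ring]
    rw [show ((1 / (N : ℝ)) * ‖S‖) ^ 2 = (‖S‖) ^ 2 / ((N:ℝ) * N) from by
      ring]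
    rw [div_le_div_iff₀ (by positivity) (by positivity)]
    calc (‖S‖) ^ 2 * ((H:ℝ) * (N * N))
        = ((H : ℝ) * (‖S‖) ^ 2) * (N * N) := by ring
      _ ≤ (2 * (N : ℝ) * G) * (N * N) := mul_le_mul_of_nonneg_right key2 (by positivity)
      _ = 2 * (N:ℝ) * G * ((N:ℝ) * N) := by ring
  have hsq : (1 / (N : ℝ)) * ‖S‖ = Real.sqrt (((1 / (N : ℝ)) * ‖S‖) ^ 2) :=
    (Real.sqrt_sq (by positivity)).symm
  rw [hsq]
  exact Real.sqrt_le_sqrt hfinal
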